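/- Let K be a symmetric positive semidefinite T × T real matrix with K_{ii} ≤ 1, λ ≥ 1, and σ_t² = λ^{-1}(K_{tt} − k_t^T (K^{(t-1)} + λI)^{-1} k_t) as above. Then σ_t² ≤ λ^{-1} ≤ 1 for every t, and Σ_{t=1}^T σ_t² ≤ (2 + λ^{-1}) · (1/2) ln det(I + λ^{-1} K). -/

import Mathlib

open Matrix
lemma aux_log_ineq {x : ℝ} (hx : 0 ≤ x) : 2 * x ≤ (2 + x) * Real.log (1 + x) := by
  set f : ℝ → ℝ := fun y => (2 + y) * Real.log (1 + y) - 2 * y with hf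
  have key : ∀ y ∈ Set.Ici (0:ℝ), 0 ≤ f y := by
    have hmono : MonotoneOn f (Set.Ici 0) := by
      have hderiv : ∀ y ∈ interior (Set.Ici (0:ℝ)),
          HasDerivAt f (Real.log (1 + y) - y / (1 + y)) y := by
        intro y hy
        rw [interior_Ici] at hy
        have hy0 : (0:ℝ) < y := hy
        have h1y : (1:ℝ) + y ≠ 0 := by positivity
        have hlog : HasDerivAt (fun z : ℝ => Real.log (1 + z)) (1 / (1 + y)) y := by
          simpa using ((hasDerivAt_id y).const_add 1).log h1y
        have hmul : HasDerivAt (fun z : ℝ => (2 + z) * Real.log (1 + z))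
            (1 * Real.log (1 + y) + (2 + y) * (1 / (1 + y))) y :=
          ((hasDerivAt_id y).const_add 2).mul hlog
        have := hmul.sub ((hasDerivAt_id y).const_mul 2)
        refine this.congr_deriv ?_
        field_simp
        ring
      apply monotoneOn_of_deriv_nonneg (convex_Ici 0)
      · apply ContinuousOn.sub
        · apply ContinuousOn.mul (by fun_prop)
          apply Real.continuousOn_log.comp (by fun_prop)
          intro y hy
          simp only [Set.mem_Ici] at hy
          simp only [Set.mem_compl_iff, Set.mem_singleton_iff]
          positivity
        · fun_prop
      · intro y hy
        exact (hderiv y hy).differentiableAt.differentiableWithinAt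
      · intro y hy
        rw [(hderiv y hy).deriv]
        rw [interior_Ici] at hy
        have hy0 : (0:ℝ) < y := hy
        have h1y : (0:ℝ) < 1 + y := by positivity
        have := Real.one_sub_inv_le_log_of_pos h1y
        have h2 : 1 - (1 + y)⁻¹ = y / (1 + y) := by field_simp; ring
        linarith [h2 ▸ this]
    intro y hy
    have h0 : f 0 = 0 := by simp [hf]
    have := hmono (Set.self_mem_Ici) hy (Set.mem_Ici.mp hy)
    linarith [h0 ▸ this]
  have := key x hx
  simp only [hf] at this
  linarith

lemma aux_det_succ {n : ℕ} (M : Matrix (Fin (n+1)) (Fin (n+1)) ℝ)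
    (A : Matrix (Fin n) (Fin n) ℝ) (hA : A = M.submatrix Fin.castSucc Fin.castSucc)
    [Invertible A] :
    M.det = A.det * (M (Fin.last n) (Fin.last n) -
      (fun j => M (Fin.last n) (Fin.castSucc j)) ⬝ᵥ
        (A⁻¹ *ᵥ fun i => M (Fin.castSucc i) (Fin.last n))) := by
  classical
  let B : Matrix (Fin n) (Fin 1) ℝ := Matrix.of fun i _ => M (Fin.castSucc i) (Fin.last n)
  let C : Matrix (Fin 1) (Fin n) ℝ := Matrix.of fun _ j => M (Fin.last n) (Fin.castSucc j)
  let D : Matrix (Fin 1) (Fin 1) ℝ := Matrix.of fun _ _ => M (Fin.last n) (Fin.last n)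
  have hM : M.submatrix (finSumFinEquiv (m := n) (n := 1))
      (finSumFinEquiv (m := n) (n := 1)) = fromBlocks A B C D := by
    ext i j
    have hlast : finSumFinEquiv (Sum.inr (0 : Fin 1)) = Fin.last n := by
      simp [finSumFinEquiv_apply_right, Fin.ext_iff]
    have hcast : ∀ i : Fin n, finSumFinEquiv (Sum.inl i) = Fin.castSucc i := by
      intro i; simp [finSumFinEquiv_apply_left, Fin.ext_iff]
    cases i with
    | inl i => cases j with
      | inl j => simp [hA, fromBlocks, hcast]
      | inr j => simp [B, fromBlocks, hcast, Fin.eq_zero j, hlast]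
    | inr i => cases j with
      | inl j => simp [C, fromBlocks, hcast, Fin.eq_zero i, hlast]
      | inr j => simp [D, fromBlocks, Fin.eq_zero i, Fin.eq_zero j, hlast]
  have hdet := Matrix.det_submatrix_equiv_self (finSumFinEquiv (m := n) (n := 1)) M
  rw [hM] at hdet
  rw [← hdet, det_fromBlocks₁₁, invOf_eq_nonsing_inv]
  congr 1
  rw [det_fin_one]
  simp only [Matrix.sub_apply, D, Matrix.of_apply]
  congr 1
  simp only [mul_apply, mulVec, dotProduct, B, C, Matrix.of_apply, Finset.sum_mul, Finset.mul_sum, mul_assoc]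
  rw [Finset.sum_comm]

/-- For a symmetric PSD Gram matrix `K` with `K_{ii} ≤ 1` and `λ ≥ 1`, with
`σ_t² = λ^{-1}(K_{tt} - k_t^T (K^{(t-1)} + λI)^{-1} k_t)`, one has `σ_t² ≤ λ^{-1} ≤ 1`
for every `t`, and `Σ_{t=1}^T σ_t² ≤ (2 + λ^{-1}) · (1/2) ln det(I + λ^{-1} K)`. -/
theorem stmt12 (T : ℕ) (hT : 0 < T)
    (K : Matrix (Fin T) (Fin T) ℝ)
    (hK : K.PosSemidef) (hKdiag : ∀ i, K i i ≤ 1)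
    (lam : ℝ) (hlam : 1 ≤ lam)
    (σsq : Fin T → ℝ)
    (hσsq : ∀ t : Fin T, σsq t =
      lam⁻¹ * (K t t -
        (fun i : Fin t.val => K (Fin.castLE t.isLt.le i) t) ⬝ᵥ
          (((Matrix.of fun i j : Fin t.val =>
                K (Fin.castLE t.isLt.le i) (Fin.castLE t.isLt.le j)) +
              lam • (1 : Matrix (Fin t.val) (Fin t.val) ℝ))⁻¹ *ᵥ
            fun i : Fin t.val => K (Fin.castLE t.isLt.le i) t))) :
    (∀ t : Fin T, σsq t ≤ lam⁻¹) ∧ lam⁻¹ ≤ 1 ∧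
    ∑ t : Fin T, σsq t ≤ (2 + lam⁻¹) * ((1 / 2) * Real.log (1 + lam⁻¹ • K).det) := by
  classical
  have hlam0 : (0:ℝ) < lam := lt_of_lt_of_le one_pos hlam
  have hlaminv0 : (0:ℝ) ≤ lam⁻¹ := by positivity
  have hinvle : lam⁻¹ ≤ 1 := inv_le_one_of_one_le₀ hlam
  have hsymm : ∀ a b, K a b = K b a := by
    intro a b
    have := congrFun (congrFun hK.1 a) b
    simpa [Matrix.conjTranspose_apply] using this.symm
  -- positive definiteness of principal submatrices plus lam • 1
  have hlamIpd : ∀ m : ℕ, (lam • (1 : Matrix (Fin m) (Fin m) ℝ)).PosDef := by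
    intro m
    rw [Matrix.smul_one_eq_diagonal]
    exact Matrix.PosDef.diagonal fun _ => hlam0
  have hApd : ∀ (m : ℕ) (f : Fin m → Fin T),
      (K.submatrix f f + lam • (1 : Matrix (Fin m) (Fin m) ℝ)).PosDef :=
    fun m f => Matrix.PosDef.posSemidef_add (hK.submatrix f) (hlamIpd m)
  -- notation for each t
  set At : (t : Fin T) → Matrix (Fin t.val) (Fin t.val) ℝ := fun t =>
    (Matrix.of fun i j : Fin t.val =>
        K (Fin.castLE t.isLt.le i) (Fin.castLE t.isLt.le j)) +
      lam • (1 : Matrix (Fin t.val) (Fin t.val) ℝ) with hAt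
  set bt : (t : Fin T) → Fin t.val → ℝ := fun t i => K (Fin.castLE t.isLt.le i) t with hbt
  have hAtpd : ∀ t : Fin T, (At t).PosDef := fun t => hApd t.val (Fin.castLE t.isLt.le)
  have hq0 : ∀ t : Fin T, 0 ≤ bt t ⬝ᵥ ((At t)⁻¹ *ᵥ bt t) := by
    intro t
    have := ((hAtpd t).posSemidef.inv).dotProduct_mulVec_nonneg (bt t)
    simpa using this
  -- upper bound on the quadratic form via Schur complement PSD
  have hqle : ∀ t : Fin T, bt t ⬝ᵥ ((At t)⁻¹ *ᵥ bt t) ≤ K t t := by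
    intro t
    set B : Matrix (Fin t.val) (Fin 1) ℝ := Matrix.of fun i _ => bt t i with hB
    set D : Matrix (Fin 1) (Fin 1) ℝ := Matrix.of fun _ _ => K t t with hD
    have hN : (fromBlocks (At t) B Bᴴ D).PosSemidef := by
      have hEq : fromBlocks (At t) B Bᴴ D =
          K.submatrix (Sum.elim (Fin.castLE t.isLt.le) (fun _ => t))
            (Sum.elim (Fin.castLE t.isLt.le) (fun _ => t)) +
          Matrix.diagonal (Sum.elim (fun _ : Fin t.val => lam) (fun _ : Fin 1 => 0)) := by
        ext i j
        cases i with
        | inl i => cases j with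
          | inl j =>
              by_cases h : i = j <;>
                simp [hAt, fromBlocks, Matrix.one_apply, Matrix.diagonal_apply, h]
          | inr j => simp [hB, fromBlocks, Matrix.diagonal_apply, hbt]
        | inr i => cases j with
          | inl j =>
              simp [hB, fromBlocks, Matrix.conjTranspose_apply, Matrix.diagonal_apply,
                hbt, hsymm t]
          | inr j => simp [hD, fromBlocks, Matrix.diagonal_apply, Fin.eq_zero i, Fin.eq_zero j]
      rw [hEq]
      exact (hK.submatrix _).add (Matrix.PosSemidef.diagonal (by
        rintro (i | i) <;> simp [le_of_lt hlam0]))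
    haveI : Invertible (At t) :=
      Matrix.invertibleOfIsUnitDet _ (hAtpd t).det_pos.ne'.isUnit
    have hschur := (Matrix.PosDef.fromBlocks₁₁ B D (hAtpd t)).mp hN
    have h00 := hschur.dotProduct_mulVec_nonneg (fun _ => (1:ℝ))
    have hentry : (Bᴴ * (At t)⁻¹ * B) 0 0 = bt t ⬝ᵥ ((At t)⁻¹ *ᵥ bt t) := by
      simp only [mul_apply, mulVec, dotProduct, hB, Matrix.conjTranspose_apply,
        Matrix.of_apply, star_trivial, Finset.sum_mul, Finset.mul_sum, mul_assoc]
      rw [Finset.sum_comm]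
    simp only [dotProduct, mulVec, Matrix.sub_apply, hD, Matrix.of_apply, star_trivial,
      Fin.sum_univ_one, one_mul, mul_one] at h00
    rw [hentry] at h00
    linarith
  have hupper : ∀ t : Fin T, σsq t ≤ lam⁻¹ := by
    intro t
    rw [hσsq t]
    have h1 : K t t - bt t ⬝ᵥ ((At t)⁻¹ *ᵥ bt t) ≤ 1 := by
      have := hq0 t; have := hKdiag t; linarith
    calc lam⁻¹ * (K t t - bt t ⬝ᵥ ((At t)⁻¹ *ᵥ bt t)) ≤ lam⁻¹ * 1 :=
          mul_le_mul_of_nonneg_left h1 hlaminv0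
      _ = lam⁻¹ := mul_one _
  have hlower : ∀ t : Fin T, 0 ≤ σsq t := by
    intro t
    rw [hσsq t]
    have := hqle t
    have h2 : 0 ≤ K t t - bt t ⬝ᵥ ((At t)⁻¹ *ᵥ bt t) := by linarith
    positivity
  refine ⟨hupper, hinvle, ?_⟩
  -- determinant recursion
  have hsub1 : ∀ {m : ℕ} (h : m ≤ T),
      (K + lam • 1).submatrix (Fin.castLE h) (Fin.castLE h) =
        K.submatrix (Fin.castLE h) (Fin.castLE h) +
          lam • (1 : Matrix (Fin m) (Fin m) ℝ) := by
    intro m h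
    ext i j
    simp [Matrix.one_apply, (Fin.castLE_injective h).eq_iff]
  set g : ℕ → ℝ := fun i => if h : i < T then lam * (1 + σsq ⟨i, h⟩) else 1 with hg
  have key : ∀ n (hn : n ≤ T),
      ((K + lam • 1).submatrix (Fin.castLE hn) (Fin.castLE hn)).det =
        ∏ i ∈ Finset.range n, g i := by
    intro n
    induction n with
    | zero => intro hn; simp [Matrix.det_fin_zero]
    | succ n ih =>
      intro hn
      have hn' : n < T := lt_of_lt_of_le (Nat.lt_succ_self n) hn
      set t : Fin T := ⟨n, hn'⟩ with ht
      set M := (K + lam • 1).submatrix (Fin.castLE hn) (Fin.castLE hn) with hM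
      set A := (K + lam • 1).submatrix (Fin.castLE hn'.le) (Fin.castLE hn'.le) with hA
      have hAeq : A = M.submatrix Fin.castSucc Fin.castSucc := by
        ext i j
        rw [hA, hM]
        simp only [Matrix.submatrix_apply]
        congr 1 <;> exact Fin.ext rfl
      have hA3 : A = At t := by
        rw [hA, hsub1]
        rfl
      have hApdA : A.PosDef := by rw [hA3]; exact hAtpd t
      haveI : Invertible A := Matrix.invertibleOfIsUnitDet _ hApdA.det_pos.ne'.isUnit
      have hlastc : Fin.castLE hn (Fin.last n) = t := Fin.ext rfl
      have hcastc : ∀ i : Fin n, Fin.castLE hn (Fin.castSucc i) = Fin.castLE hn'.le i :=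
        fun i => Fin.ext rfl
      have hne : ∀ i : Fin n, Fin.castLE hn'.le i ≠ t := by
        intro i hcontra
        have := congrArg Fin.val hcontra
        simp only [Fin.castLE, ht] at this
        omega
      have hb : (fun i : Fin n => M (Fin.castSucc i) (Fin.last n)) = bt t := by
        funext i
        rw [hM, Matrix.submatrix_apply, hcastc, hlastc]
        simp [Matrix.one_apply_ne (hne i), hbt]
      have hc : (fun j : Fin n => M (Fin.last n) (Fin.castSucc j)) = bt t := by
        funext j
        rw [hM, Matrix.submatrix_apply, hcastc, hlastc]
        simp [Matrix.one_apply_ne (Ne.symm (hne j)), hbt, hsymm t]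
      have hdd : M (Fin.last n) (Fin.last n) = K t t + lam := by
        rw [hM, Matrix.submatrix_apply, hlastc]
        simp [Matrix.one_apply_eq]
      rw [aux_det_succ M A hAeq, Finset.prod_range_succ, ← ih hn'.le, ← hA]
      congr 1
      rw [hb, hc, hdd, hA3]
      have hls : lam * σsq t = K t t - bt t ⬝ᵥ ((At t)⁻¹ *ᵥ bt t) := by
        rw [hσsq t, ← mul_assoc, mul_inv_cancel₀ hlam0.ne', one_mul]
      have hgn : g n = lam * (1 + σsq t) := by
        rw [hg]
        simp only
        rw [dif_pos hn', ← ht]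
      rw [hgn]
      linarith [hls]
  have hdetKl : (K + lam • 1).det = ∏ i ∈ Finset.range T, g i := by
    have h := key T le_rfl
    have hid : (Fin.castLE (le_refl T)) = (id : Fin T → Fin T) := funext fun i => Fin.ext rfl
    rwa [hid, Matrix.submatrix_id_id] at h
  have hdet1 : (1 + lam⁻¹ • K).det = ∏ t : Fin T, (1 + σsq t) := by
    have h1 : 1 + lam⁻¹ • K = lam⁻¹ • (K + lam • 1) := by
      rw [smul_add, smul_smul, inv_mul_cancel₀ hlam0.ne', one_smul, add_comm]
    rw [h1, Matrix.det_smul, hdetKl, Fintype.card_fin]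
    have h2 : lam⁻¹ ^ T * ∏ i ∈ Finset.range T, g i =
        ∏ i ∈ Finset.range T, (lam⁻¹ * g i) := by
      rw [Finset.prod_mul_distrib, Finset.prod_const, Finset.card_range]
    rw [h2, ← Fin.prod_univ_eq_prod_range (fun i => lam⁻¹ * g i) T]
    apply Finset.prod_congr rfl
    intro u _
    rw [hg]
    simp only
    rw [dif_pos u.isLt, ← mul_assoc, inv_mul_cancel₀ hlam0.ne', one_mul, Fin.eta]
  have hprodpos : ∀ u : Fin T, (0:ℝ) < 1 + σsq u := fun u => by
    have := hlower u; linarith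
  have hlog : Real.log (1 + lam⁻¹ • K).det = ∑ u : Fin T, Real.log (1 + σsq u) := by
    rw [hdet1, Real.log_prod]
    exact fun u _ => (hprodpos u).ne'
  calc ∑ u : Fin T, σsq u
      ≤ ∑ u : Fin T, (2 + lam⁻¹) * ((1/2) * Real.log (1 + σsq u)) := by
        apply Finset.sum_le_sum
        intro u _
        have h2x := aux_log_ineq (hlower u)
        have hlogn : 0 ≤ Real.log (1 + σsq u) :=
          Real.log_nonneg (by linarith [hlower u])
        have hσle := hupper u
        nlinarith [mul_le_mul_of_nonneg_right
          (show (2:ℝ) + σsq u ≤ 2 + lam⁻¹ by linarith) hlogn]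
    _ = (2 + lam⁻¹) * ((1/2) * Real.log (1 + lam⁻¹ • K).det) := by
        rw [hlog, ← Finset.mul_sum, ← Finset.mul_sum]
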